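/- Let $X \in \mathbb{C}^{n\times p}$ with $X^*HX = K$ where $H \succeq 0$ symmetric and $K \succ 0$ symmetric, and let $G \in \mathbb{C}^{n\times p}$. With $D = GX^*H^2X - HXG^*HX$, one has $\langle G, D\rangle = \frac{1}{2}\|GX^*H - HXG^*\|_F^2 \geq \frac{1}{2}\|XK^{-1}\|_2^{-2}\|\nabla\mathcal{F}\|_F^2$, where $\nabla\mathcal{F} = G - HXG^*XK^{-1}$ and $\langle A,B\rangle = \mathrm{Re}\,\mathrm{tr}(A^*B)$. -/

import Mathlib

open Matrix
open scoped ComplexOrder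

/-- Frobenius norm of a complex matrix. -/
noncomputable def frobC {n p : ℕ} (A : Matrix (Fin n) (Fin p) ℂ) : ℝ :=
  Real.sqrt (Matrix.trace (Aᴴ * A)).re

/-- Spectral norm of a (rectangular) complex matrix. -/
noncomputable def specC {n p : ℕ} (A : Matrix (Fin n) (Fin p) ℂ) : ℝ :=
  ‖LinearMap.toContinuousLinearMap (Matrix.toEuclideanLin A)‖

open scoped Matrix.Norms.L2Operator in
lemma specC_eq_l2norm {n p : ℕ} (A : Matrix (Fin n) (Fin p) ℂ) : specC A = ‖A‖ := rfl

open scoped Matrix.Norms.L2Operator in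
lemma specC_conjTranspose {n p : ℕ} (A : Matrix (Fin n) (Fin p) ℂ) : specC Aᴴ = specC A := by
  rw [specC_eq_l2norm, specC_eq_l2norm, Matrix.l2_opNorm_conjTranspose]

lemma trace_re_eq_sum {n p : ℕ} (A : Matrix (Fin n) (Fin p) ℂ) :
    (Matrix.trace (Aᴴ * A)).re = ∑ i, ∑ j, ‖A i j‖ ^ 2 := by
  rw [Matrix.trace, Complex.re_sum]
  simp only [Matrix.diag, Matrix.mul_apply, Matrix.conjTranspose_apply, Complex.re_sum]
  rw [Finset.sum_comm]
  congr 1; ext i; congr 1; ext j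
  simp [Complex.mul_re, Complex.sq_norm, Complex.normSq_apply]

lemma frobC_sq {n p : ℕ} (A : Matrix (Fin n) (Fin p) ℂ) :
    frobC A ^ 2 = (Matrix.trace (Aᴴ * A)).re := by
  rw [frobC, Real.sq_sqrt]
  rw [trace_re_eq_sum]; positivity

lemma row_bound {n p : ℕ} (M : Matrix (Fin n) (Fin p) ℂ) (a : Fin n → ℂ) :
    ∑ j, ‖∑ k, a k * M k j‖ ^ 2 ≤ specC M ^ 2 * ∑ k, ‖a k‖ ^ 2 := by
  set T := LinearMap.toContinuousLinearMap (Matrix.toEuclideanLin Mᴴ) with hT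
  set v : EuclideanSpace ℂ (Fin n) := (WithLp.equiv 2 (Fin n → ℂ)).symm (fun k => star (a k)) with hv
  have h1 : ‖T v‖ ^ 2 = ∑ j, ‖∑ k, a k * M k j‖ ^ 2 := by
    rw [EuclideanSpace.norm_eq, Real.sq_sqrt (by positivity)]
    congr 1; ext j
    have he : (T v) j = star (∑ k, a k * M k j) := by
      show (Matrix.toEuclideanLin Mᴴ v) j = _
      simp [hv, Matrix.toEuclideanLin_apply, Matrix.mulVec, dotProduct,
        Matrix.conjTranspose_apply, mul_comm]
    rw [he, norm_star]
  have h2 : ‖v‖ ^ 2 = ∑ k, ‖a k‖ ^ 2 := by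
    rw [EuclideanSpace.norm_eq, Real.sq_sqrt (by positivity)]
    congr 1; ext k
    simp [hv]
  have hb := T.le_opNorm v
  have hTn : ‖T‖ = specC M := specC_conjTranspose M
  calc ∑ j, ‖∑ k, a k * M k j‖ ^ 2 = ‖T v‖ ^ 2 := h1.symm
    _ ≤ (‖T‖ * ‖v‖) ^ 2 := by
        apply pow_le_pow_left₀ (norm_nonneg _) hb
    _ = specC M ^ 2 * ∑ k, ‖a k‖ ^ 2 := by rw [mul_pow, hTn, h2]

lemma frob_mul_le {n p : ℕ} (A : Matrix (Fin n) (Fin n) ℂ) (M : Matrix (Fin n) (Fin p) ℂ) :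
    frobC (A * M) ^ 2 ≤ specC M ^ 2 * frobC A ^ 2 := by
  rw [frobC_sq, frobC_sq, trace_re_eq_sum, trace_re_eq_sum, Finset.mul_sum]
  apply Finset.sum_le_sum; intro i _
  simpa [Matrix.mul_apply] using row_bound M (fun k => A i k)

theorem stmt_14 (n p : ℕ) (X G : Matrix (Fin n) (Fin p) ℂ)
    (H : Matrix (Fin n) (Fin n) ℂ) (hH : H.PosSemidef) (hHre : ∀ i j, (H i j).im = 0)
    (K : Matrix (Fin p) (Fin p) ℂ) (hK : K.PosDef) (hKre : ∀ i j, (K i j).im = 0)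
    (hXK : Xᴴ * H * X = K)
    (D : Matrix (Fin n) (Fin p) ℂ)
    (hD : D = G * Xᴴ * (H * H) * X - H * X * Gᴴ * H * X)
    (nF : Matrix (Fin n) (Fin p) ℂ)
    (hnF : nF = G - H * X * Gᴴ * X * K⁻¹) :
    (Matrix.trace (Gᴴ * D)).re = (1 / 2) * frobC (G * Xᴴ * H - H * X * Gᴴ) ^ 2 ∧
      (1 / 2) * (specC (X * K⁻¹) ^ 2)⁻¹ * frobC nF ^ 2 ≤ (Matrix.trace (Gᴴ * D)).re := by
  have hHH : Hᴴ = H := hH.1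
  set P := G * Xᴴ * H with hP
  set Q := H * X * Gᴴ with hQ
  set A := P - Q with hA
  have hQP : Qᴴ = P := by
    rw [hQ, hP]
    simp [Matrix.conjTranspose_mul, hHH, Matrix.mul_assoc]
  have hPQ : Pᴴ = Q := by rw [← hQP, Matrix.conjTranspose_conjTranspose]
  have hDA : D = A * (H * X) := by
    rw [hD, hA, Matrix.sub_mul]
    simp [hP, hQ, Matrix.mul_assoc]
  have htr : Matrix.trace (Gᴴ * D) = Matrix.trace (Q * A) := by
    calc Matrix.trace (Gᴴ * D) = Matrix.trace ((A * (H * X)) * Gᴴ) := by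
          rw [hDA, Matrix.trace_mul_comm]
      _ = Matrix.trace ((H * X * Gᴴ) * A) := by
          rw [Matrix.mul_assoc, Matrix.trace_mul_comm, Matrix.mul_assoc]
  have hAH : Aᴴ = Q - P := by rw [hA, Matrix.conjTranspose_sub, hQP, hPQ]
  have e1 : Matrix.trace (Q * A) = Matrix.trace (Q * P) - Matrix.trace (Q * Q) := by
    rw [hA, Matrix.mul_sub, Matrix.trace_sub]
  have e2 : Matrix.trace (Aᴴ * A) =
      Matrix.trace (Q * P) - Matrix.trace (Q * Q) - Matrix.trace (P * P)
        + Matrix.trace (P * Q) := by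
    rw [hAH, hA, Matrix.mul_sub, Matrix.sub_mul, Matrix.sub_mul, Matrix.trace_sub,
      Matrix.trace_sub, Matrix.trace_sub]
    ring
  have e3 : (Matrix.trace (P * P)).re = (Matrix.trace (Q * Q)).re := by
    have : (Q * Q)ᴴ = P * P := by rw [Matrix.conjTranspose_mul, hQP]
    rw [← this, Matrix.trace_conjTranspose]
    simp
  have e4 : Matrix.trace (P * Q) = Matrix.trace (Q * P) := Matrix.trace_mul_comm P Q
  have hpart1 : (Matrix.trace (Gᴴ * D)).re = (1 / 2) * frobC A ^ 2 := by
    rw [htr, frobC_sq, e1, e2, e4]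
    simp only [Complex.sub_re, Complex.add_re]
    rw [e3]
    ring
  refine ⟨hpart1, ?_⟩
  set M := X * K⁻¹ with hM
  have hKinv : K * K⁻¹ = 1 := Matrix.mul_nonsing_inv K hK.det_pos.ne'.isUnit
  have hPM : P * M = G := by
    rw [hP, hM]
    calc G * Xᴴ * H * (X * K⁻¹) = G * ((Xᴴ * H * X) * K⁻¹) := by
          simp [Matrix.mul_assoc]
      _ = G := by rw [hXK, hKinv, Matrix.mul_one]
  have hnFA : nF = A * M := by
    rw [hnF, hA, Matrix.sub_mul, hPM, hQ, hM]
    simp [Matrix.mul_assoc]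
  rw [hpart1, hnFA]
  rcases eq_or_ne (specC M) 0 with hc | hc
  · rw [hc]
    simp
    positivity
  · have hcpos : 0 < specC M := lt_of_le_of_ne (norm_nonneg _) (Ne.symm hc)
    have hle := frob_mul_le A M
    have h2 : (0:ℝ) < specC M ^ 2 := by positivity
    calc (1:ℝ) / 2 * (specC M ^ 2)⁻¹ * frobC (A * M) ^ 2
        ≤ 1 / 2 * (specC M ^ 2)⁻¹ * (specC M ^ 2 * frobC A ^ 2) := by
          rw [mul_assoc, mul_assoc]; gcongr
      _ = 1 / 2 * frobC A ^ 2 := by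
          field_simp
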